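/- (Dilation via the projection lemma) Let A ∈ ℝ^{n×n} and let P ∈ S^n be positive definite. Then the symmetric block matrix [[PA + AᵀP − P, P], [P, −P]] is negative definite if and only if there exists V ∈ ℝ^{n×n} such that the 3×3 symmetric block matrix [[−(V + Vᵀ), VᵀA + P, Vᵀ], [(VᵀA + P)ᵀ, −P, 0], [V, 0, −P]] is negative definite. -/

import Mathlib

open Matrix

/-- A 3×3 symmetric-pattern block matrix assembled from the indicated blocks. -/
def Matrix.block3 {n m p : Type*} (A : Matrix n n ℝ) (B : Matrix n m ℝ) (C : Matrix n p ℝ)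
    (D : Matrix m n ℝ) (E : Matrix m m ℝ) (F : Matrix m p ℝ)
    (G : Matrix p n ℝ) (H : Matrix p m ℝ) (I : Matrix p p ℝ) :
    Matrix (n ⊕ (m ⊕ p)) (n ⊕ (m ⊕ p)) ℝ :=
  Matrix.fromBlocks A (Matrix.fromCols B C) (Matrix.fromRows D G)
    (Matrix.fromBlocks E F H I)


section helpers

variable {m p : Type*} [Fintype m] [Fintype p] [DecidableEq m] [DecidableEq p]

private lemma rct (B : Matrix m p ℝ) : Bᴴ = Bᵀ :=
  Matrix.conjTranspose_eq_transpose_of_trivial B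

private lemma cancel_left {M N : Matrix m m ℝ} (h : M * N = 1) (Z : Matrix m p ℝ) :
    M * (N * Z) = Z := by rw [← Matrix.mul_assoc, h, Matrix.one_mul]

/-- Congruence preserves positive definiteness (real case). -/
private lemma posDef_conj {M X : Matrix m m ℝ} (hM : M.PosDef) (hX : IsUnit X.det) :
    (Xᵀ * M * X).PosDef := by
  haveI := X.invertibleOfIsUnitDet hX
  rw [posDef_iff_dotProduct_mulVec]
  constructor
  · show _ᴴ = _
    have hMt : Mᵀ = M := by rw [← rct]; exact hM.1
    simp only [conjTranspose_mul, rct, transpose_transpose, hMt, Matrix.mul_assoc]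
  · intro x hx
    have hXx : X *ᵥ x ≠ 0 := by
      intro h
      apply hx
      apply Matrix.mulVec_injective_of_invertible X
      rw [h, Matrix.mulVec_zero]
    have e : star x ⬝ᵥ ((Xᵀ * M * X) *ᵥ x)
        = star (X *ᵥ x) ⬝ᵥ (M *ᵥ (X *ᵥ x)) := by
      simp only [star_trivial, ← Matrix.mulVec_mulVec]
      rw [Matrix.dotProduct_mulVec x Xᵀ, Matrix.vecMul_transpose]
    rw [e]
    exact hM.dotProduct_mulVec_pos hXx

end helpers

section schur

variable {m p : Type*} [Fintype m] [Fintype p] [DecidableEq m] [DecidableEq p]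

private lemma posDef_fromBlocks₂₂ (A : Matrix m m ℝ) (B : Matrix m p ℝ)
    {D : Matrix p p ℝ} (hD : D.PosDef) :
    (Matrix.fromBlocks A B Bᴴ D).PosDef ↔ (A - B * D⁻¹ * Bᴴ).PosDef := by
  haveI : Invertible D := D.invertibleOfIsUnitDet (isUnit_iff_ne_zero.2 hD.det_pos.ne')
  rw [posDef_iff_dotProduct_mulVec, posDef_iff_dotProduct_mulVec, Matrix.IsHermitian.fromBlocks₂₂ A B hD.1]
  refine and_congr_right fun _ => ⟨fun h x hx => ?_, fun h v hv => ?_⟩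
  · have hv : (x ⊕ᵥ (-((D⁻¹ * Bᴴ) *ᵥ x))) ≠ 0 := by
      intro h0
      apply hx
      funext i
      exact congrFun h0 (Sum.inl i)
    have := h hv
    rw [Matrix.dotProduct_mulVec, Matrix.schur_complement_eq₂₂ A B _ _ hD.1,
      add_neg_cancel] at this
    simpa [Matrix.dotProduct_mulVec] using this
  · rw [← Sum.elim_comp_inl_inr v, Matrix.dotProduct_mulVec,
      Matrix.schur_complement_eq₂₂ A B _ _ hD.1]
    rcases eq_or_ne (v ∘ Sum.inl) 0 with h1 | h1
    · have h2 : v ∘ Sum.inr ≠ 0 := by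
        intro h2
        apply hv
        rw [← Sum.elim_comp_inl_inr v, h1, h2]
        funext i
        cases i <;> rfl
      have hu : (D⁻¹ * Bᴴ) *ᵥ (v ∘ Sum.inl) + v ∘ Sum.inr ≠ 0 := by
        simpa [h1] using h2
      have := hD.dotProduct_mulVec_pos hu
      rw [Matrix.dotProduct_mulVec] at this
      have h0 : star (v ∘ Sum.inl) ᵥ* (A - B * D⁻¹ * Bᴴ) ⬝ᵥ (v ∘ Sum.inl) = 0 := by
        simp [h1]
      rw [h0, add_zero]
      exact this
    · have := h h1
      rw [Matrix.dotProduct_mulVec] at this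
      have hge : (0:ℝ) ≤ star ((D⁻¹ * Bᴴ) *ᵥ (v ∘ Sum.inl) + v ∘ Sum.inr) ᵥ* D ⬝ᵥ
          ((D⁻¹ * Bᴴ) *ᵥ (v ∘ Sum.inl) + v ∘ Sum.inr) := by
        rw [← Matrix.dotProduct_mulVec]
        exact hD.posSemidef.dotProduct_mulVec_nonneg _
      linarith
end schur

section more

variable {m p : Type*} [Fintype m] [Fintype p] [DecidableEq m] [DecidableEq p]

private lemma posDef_diagBlocks {P : Matrix m m ℝ} {Q : Matrix p p ℝ}
    (hP : P.PosDef) (hQ : Q.PosDef) :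
    (Matrix.fromBlocks P 0 0 Q).PosDef := by
  have h0 : Matrix.fromBlocks P (0 : Matrix m p ℝ) 0 Q
      = Matrix.fromBlocks P 0 (0 : Matrix m p ℝ)ᴴ Q := by simp
  rw [h0, posDef_fromBlocks₂₂ _ _ hQ]
  simpa using hP

private lemma inv_diagBlocks {P : Matrix m m ℝ} {Q : Matrix p p ℝ}
    (hP : IsUnit P.det) (hQ : IsUnit Q.det) :
    (Matrix.fromBlocks P 0 0 Q)⁻¹ = Matrix.fromBlocks P⁻¹ 0 0 Q⁻¹ := by
  apply Matrix.inv_eq_right_inv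
  rw [Matrix.fromBlocks_multiply]
  simp [Matrix.mul_nonsing_inv _ hP, Matrix.mul_nonsing_inv _ hQ,
    Matrix.fromBlocks_one]

private lemma inv_sub_inv_posDef {R W : Matrix m m ℝ} (hR : R.PosDef) (hW : W.PosDef)
    (h : (W - R).PosDef) : (R⁻¹ - W⁻¹).PosDef := by
  have hRd : IsUnit R.det := isUnit_iff_ne_zero.2 hR.det_pos.ne'
  have hWd : IsUnit W.det := isUnit_iff_ne_zero.2 hW.det_pos.ne'
  have hWt : Wᵀ = W := by rw [← rct]; exact hW.1
  have hRt : Rᵀ = R := by rw [← rct]; exact hR.1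
  have l : W * (R⁻¹ - W⁻¹) * W = W * R⁻¹ * W - W := by
    rw [Matrix.mul_sub, Matrix.mul_nonsing_inv _ hWd, Matrix.sub_mul, Matrix.one_mul]
  have r : (W - R) + (W - R) * R⁻¹ * (W - R) = W * R⁻¹ * W - W := by
    rw [Matrix.sub_mul W R R⁻¹, Matrix.mul_nonsing_inv _ hRd,
      Matrix.sub_mul (W * R⁻¹) 1 (W - R), Matrix.one_mul,
      Matrix.mul_sub (W * R⁻¹) W R, Matrix.mul_assoc W R⁻¹ R,
      Matrix.nonsing_inv_mul _ hRd, Matrix.mul_one]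
    abel
  have key : R⁻¹ - W⁻¹ = W⁻¹ᵀ * ((W - R) + (W - R) * R⁻¹ * (W - R)) * W⁻¹ := by
    rw [r, ← l, Matrix.transpose_nonsing_inv, hWt, ← Matrix.mul_assoc, ← Matrix.mul_assoc,
      Matrix.nonsing_inv_mul _ hWd, Matrix.one_mul, Matrix.mul_assoc,
      Matrix.mul_nonsing_inv _ hWd, Matrix.mul_one]
  have hC : (W - R)ᵀ = W - R := by rw [Matrix.transpose_sub, hWt, hRt]
  have hCd : IsUnit (W - R).det := isUnit_iff_ne_zero.2 h.det_pos.ne'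
  have inner : ((W - R) + (W - R) * R⁻¹ * (W - R)).PosDef := by
    have h2 := posDef_conj hR.inv hCd
    rw [hC] at h2
    exact h.add h2
  rw [key]
  exact posDef_conj inner (isUnit_iff_ne_zero.2 hW.inv.det_pos.ne')

end more

section core
variable {n : ℕ}

private lemma core (A P : Matrix (Fin n) (Fin n) ℝ) (hP : P.PosDef)
    (hC : (-(P * A + Aᵀ * P)).PosDef) :
    ∃ V : Matrix (Fin n) (Fin n) ℝ,
      (V + Vᵀ - (Vᵀ * A + P) * P⁻¹ * (Vᵀ * A + P)ᵀ - Vᵀ * P⁻¹ * V).PosDef := by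
  have hPd : IsUnit P.det := isUnit_iff_ne_zero.2 hP.det_pos.ne'
  have hPt : Pᵀ = P := by rw [← rct]; exact hP.1
  have hPit : P⁻¹ᵀ = P⁻¹ := by rw [Matrix.transpose_nonsing_inv, hPt]
  have cp1 : P * P⁻¹ = 1 := Matrix.mul_nonsing_inv _ hPd
  have cp2 : P⁻¹ * P = 1 := Matrix.nonsing_inv_mul _ hPd
  have cp1' : ∀ Z : Matrix (Fin n) (Fin n) ℝ, P * (P⁻¹ * Z) = Z := fun Z => by
    rw [← Matrix.mul_assoc, cp1, Matrix.one_mul]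
  have cp2' : ∀ Z : Matrix (Fin n) (Fin n) ℝ, P⁻¹ * (P * Z) = Z := fun Z => by
    rw [← Matrix.mul_assoc, cp2, Matrix.one_mul]
  obtain ⟨R, hRdef⟩ : ∃ R : Matrix (Fin n) (Fin n) ℝ, R = A * P⁻¹ * Aᵀ + P⁻¹ := ⟨_, rfl⟩
  have hRpd : R.PosDef := by
    rw [hRdef]
    have h1 := hP.inv.posSemidef.mul_mul_conjTranspose_same A
    rw [rct] at h1
    exact Matrix.PosDef.posSemidef_add h1 hP.inv
  have hRd : IsUnit R.det := isUnit_iff_ne_zero.2 hRpd.det_pos.ne'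
  have hRt : Rᵀ = R := by rw [← rct]; exact hRpd.1
  have hRit : R⁻¹ᵀ = R⁻¹ := by rw [Matrix.transpose_nonsing_inv, hRt]
  have cr1 : R * R⁻¹ = 1 := Matrix.mul_nonsing_inv _ hRd
  have cr2 : R⁻¹ * R = 1 := Matrix.nonsing_inv_mul _ hRd
  have cr1' : ∀ Z : Matrix (Fin n) (Fin n) ℝ, R * (R⁻¹ * Z) = Z := fun Z => by
    rw [← Matrix.mul_assoc, cr1, Matrix.one_mul]
  have cr2' : ∀ Z : Matrix (Fin n) (Fin n) ℝ, R⁻¹ * (R * Z) = Z := fun Z => by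
    rw [← Matrix.mul_assoc, cr2, Matrix.one_mul]
  obtain ⟨B, hBdef⟩ : ∃ B : Matrix (Fin n) (Fin n) ℝ, B = 1 - A := ⟨_, rfl⟩
  have hBt : Bᵀ = 1 - Aᵀ := by rw [hBdef, Matrix.transpose_sub, Matrix.transpose_one]
  have hW : B * P⁻¹ * Bᵀ = R + -(A * P⁻¹ + P⁻¹ * Aᵀ) := by
    rw [hBt, hBdef, hRdef]
    simp only [Matrix.sub_mul, Matrix.mul_sub, Matrix.mul_add, Matrix.add_mul,
      Matrix.one_mul, Matrix.mul_one, Matrix.mul_assoc]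
    abel
  -- the congruence of -(PA+AᵀP) by P⁻¹
  have idC : P⁻¹ᵀ * (-(P * A + Aᵀ * P)) * P⁻¹ = -(A * P⁻¹ + P⁻¹ * Aᵀ) := by
    rw [hPit]
    simp only [Matrix.mul_neg, Matrix.neg_mul, Matrix.mul_add, Matrix.add_mul,
      Matrix.mul_assoc, cp1', cp2', cp1, cp2, Matrix.mul_one, Matrix.one_mul]
  have hCC : (-(A * P⁻¹ + P⁻¹ * Aᵀ)).PosDef := by
    have h2 := posDef_conj hC (isUnit_iff_ne_zero.2 hP.inv.det_pos.ne')
    rwa [idC] at h2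
  have hWpd : (B * P⁻¹ * Bᵀ).PosDef := by rw [hW]; exact hRpd.add hCC
  have hBd : IsUnit B.det := by
    have hdet := hWpd.det_pos
    rw [Matrix.det_mul, Matrix.det_mul, Matrix.det_transpose] at hdet
    refine isUnit_iff_ne_zero.2 fun h0 => ?_
    rw [h0] at hdet; simp at hdet
  have hBtd : IsUnit Bᵀ.det := by rwa [Matrix.det_transpose]
  have hWd : IsUnit (B * P⁻¹ * Bᵀ).det := isUnit_iff_ne_zero.2 hWpd.det_pos.ne'
  have hPW : Bᵀ * (B * P⁻¹ * Bᵀ)⁻¹ * B = P := by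
    rw [Matrix.mul_inv_rev, Matrix.mul_inv_rev, Matrix.nonsing_inv_nonsing_inv _ hPd,
      ← Matrix.mul_assoc, ← Matrix.mul_assoc, Matrix.mul_nonsing_inv _ hBtd,
      Matrix.one_mul, Matrix.mul_assoc, Matrix.nonsing_inv_mul _ hBd, Matrix.mul_one]
  have hinv : (R⁻¹ - (B * P⁻¹ * Bᵀ)⁻¹).PosDef := by
    apply inv_sub_inv_posDef hRpd hWpd
    rw [hW, add_sub_cancel_left]
    exact hCC
  have hcongr := posDef_conj hinv hBd
  have e : Bᵀ * (R⁻¹ - (B * P⁻¹ * Bᵀ)⁻¹) * B = Bᵀ * R⁻¹ * B - P := by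
    rw [Matrix.mul_sub, Matrix.sub_mul, hPW]
  rw [e] at hcongr
  refine ⟨R⁻¹ * B, ?_⟩
  have hEId : ∀ V : Matrix (Fin n) (Fin n) ℝ,
      V + Vᵀ - (Vᵀ * A + P) * P⁻¹ * (Vᵀ * A + P)ᵀ - Vᵀ * P⁻¹ * V
        = V + Vᵀ - Vᵀ * R * V - Vᵀ * A - Aᵀ * V - P := by
    intro V
    simp only [Matrix.transpose_add, Matrix.transpose_mul, Matrix.transpose_transpose, hPt]
    rw [hRdef]
    simp only [Matrix.mul_add, Matrix.add_mul, Matrix.mul_assoc, cp1', cp2', cp1, cp2,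
      Matrix.mul_one, Matrix.one_mul]
    abel
  have hgoal : R⁻¹ * B + (R⁻¹ * B)ᵀ - ((R⁻¹ * B)ᵀ * A + P) * P⁻¹ * ((R⁻¹ * B)ᵀ * A + P)ᵀ
      - (R⁻¹ * B)ᵀ * P⁻¹ * (R⁻¹ * B) = Bᵀ * R⁻¹ * B - P := by
    rw [hEId]
    rw [hBdef]
    simp only [Matrix.transpose_mul, Matrix.transpose_sub, Matrix.transpose_one, hRit]
    simp only [Matrix.mul_sub, Matrix.sub_mul, Matrix.mul_add, Matrix.add_mul,
      Matrix.mul_assoc, cr1', cr2', cr1, cr2, Matrix.mul_one, Matrix.one_mul]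
    abel
  rw [hgoal]
  exact hcongr
end core

private lemma core_rev {n : ℕ} (A P : Matrix (Fin n) (Fin n) ℝ) (hP : P.PosDef)
    (V : Matrix (Fin n) (Fin n) ℝ)
    (hV : (V + Vᵀ - (Vᵀ * A + P) * P⁻¹ * (Vᵀ * A + P)ᵀ - Vᵀ * P⁻¹ * V).PosDef) :
    (-(P * A + Aᵀ * P)).PosDef := by
  have hPd : IsUnit P.det := isUnit_iff_ne_zero.2 hP.det_pos.ne'
  have hPt : Pᵀ = P := by rw [← rct]; exact hP.1
  have hPit : P⁻¹ᵀ = P⁻¹ := by rw [Matrix.transpose_nonsing_inv, hPt]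
  have cp1 : P * P⁻¹ = 1 := Matrix.mul_nonsing_inv _ hPd
  have cp2 : P⁻¹ * P = 1 := Matrix.nonsing_inv_mul _ hPd
  have cp1' : ∀ Z : Matrix (Fin n) (Fin n) ℝ, P * (P⁻¹ * Z) = Z := fun Z => by
    rw [← Matrix.mul_assoc, cp1, Matrix.one_mul]
  have cp2' : ∀ Z : Matrix (Fin n) (Fin n) ℝ, P⁻¹ * (P * Z) = Z := fun Z => by
    rw [← Matrix.mul_assoc, cp2, Matrix.one_mul]
  obtain ⟨R, hRdef⟩ : ∃ R : Matrix (Fin n) (Fin n) ℝ, R = A * P⁻¹ * Aᵀ + P⁻¹ := ⟨_, rfl⟩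
  have hRpd : R.PosDef := by
    rw [hRdef]
    have h1 := hP.inv.posSemidef.mul_mul_conjTranspose_same A
    rw [rct] at h1
    exact Matrix.PosDef.posSemidef_add h1 hP.inv
  have hRd : IsUnit R.det := isUnit_iff_ne_zero.2 hRpd.det_pos.ne'
  have hRt : Rᵀ = R := by rw [← rct]; exact hRpd.1
  have hRit : R⁻¹ᵀ = R⁻¹ := by rw [Matrix.transpose_nonsing_inv, hRt]
  have cr1 : R * R⁻¹ = 1 := Matrix.mul_nonsing_inv _ hRd
  have cr2 : R⁻¹ * R = 1 := Matrix.nonsing_inv_mul _ hRd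
  have cr1' : ∀ Z : Matrix (Fin n) (Fin n) ℝ, R * (R⁻¹ * Z) = Z := fun Z => by
    rw [← Matrix.mul_assoc, cr1, Matrix.one_mul]
  have cr2' : ∀ Z : Matrix (Fin n) (Fin n) ℝ, R⁻¹ * (R * Z) = Z := fun Z => by
    rw [← Matrix.mul_assoc, cr2, Matrix.one_mul]
  obtain ⟨B, hBdef⟩ : ∃ B : Matrix (Fin n) (Fin n) ℝ, B = 1 - A := ⟨_, rfl⟩
  have hBt : Bᵀ = 1 - Aᵀ := by rw [hBdef, Matrix.transpose_sub, Matrix.transpose_one]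
  have hW : B * P⁻¹ * Bᵀ = R + -(A * P⁻¹ + P⁻¹ * Aᵀ) := by
    rw [hBt, hBdef, hRdef]
    simp only [Matrix.sub_mul, Matrix.mul_sub, Matrix.mul_add, Matrix.add_mul,
      Matrix.one_mul, Matrix.mul_one, Matrix.mul_assoc]
    abel
  have hEId : V + Vᵀ - (Vᵀ * A + P) * P⁻¹ * (Vᵀ * A + P)ᵀ - Vᵀ * P⁻¹ * V
      = V + Vᵀ - Vᵀ * R * V - Vᵀ * A - Aᵀ * V - P := by
    simp only [Matrix.transpose_add, Matrix.transpose_mul, Matrix.transpose_transpose, hPt]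
    rw [hRdef]
    simp only [Matrix.mul_add, Matrix.add_mul, Matrix.mul_assoc, cp1', cp2', cp1, cp2,
      Matrix.mul_one, Matrix.one_mul]
    abel
  rw [hEId] at hV
  -- add the positive semidefinite completion-of-squares term
  have hq := hRpd.posSemidef.mul_mul_conjTranspose_same (Vᵀ - Bᵀ * R⁻¹)
  rw [rct] at hq
  have hsum : (V + Vᵀ - Vᵀ * R * V - Vᵀ * A - Aᵀ * V - P)
      + (Vᵀ - Bᵀ * R⁻¹) * R * (Vᵀ - Bᵀ * R⁻¹)ᵀ = Bᵀ * R⁻¹ * B - P := by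
    rw [hBdef]
    simp only [Matrix.transpose_sub, Matrix.transpose_mul, Matrix.transpose_one,
      Matrix.transpose_transpose, hRit]
    simp only [Matrix.mul_sub, Matrix.sub_mul, Matrix.mul_add, Matrix.add_mul,
      Matrix.mul_assoc, cr1', cr2', cr1, cr2, Matrix.mul_one, Matrix.one_mul]
    abel
  have hBRB : (Bᵀ * R⁻¹ * B - P).PosDef := by
    rw [← hsum]
    exact hV.add_posSemidef hq
  have hfull : (Bᵀ * R⁻¹ * B).PosDef := by
    have h2 := hBRB.add hP
    rwa [sub_add_cancel] at h2
  have hBd : IsUnit B.det := by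
    have hdet := hfull.det_pos
    rw [Matrix.det_mul, Matrix.det_mul, Matrix.det_transpose] at hdet
    refine isUnit_iff_ne_zero.2 fun h0 => ?_
    rw [h0] at hdet; simp at hdet
  have hBtd : IsUnit Bᵀ.det := by rwa [Matrix.det_transpose]
  have hWpd : (B * P⁻¹ * Bᵀ).PosDef := by
    have h2 := posDef_conj hP.inv hBtd
    rwa [Matrix.transpose_transpose] at h2
  have hWd : IsUnit (B * P⁻¹ * Bᵀ).det := isUnit_iff_ne_zero.2 hWpd.det_pos.ne'
  have hPW : Bᵀ * (B * P⁻¹ * Bᵀ)⁻¹ * B = P := by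
    rw [Matrix.mul_inv_rev, Matrix.mul_inv_rev, Matrix.nonsing_inv_nonsing_inv _ hPd,
      ← Matrix.mul_assoc, ← Matrix.mul_assoc, Matrix.mul_nonsing_inv _ hBtd,
      Matrix.one_mul, Matrix.mul_assoc, Matrix.nonsing_inv_mul _ hBd, Matrix.mul_one]
  -- recover R⁻¹ - W⁻¹ ≻ 0 from the congruence
  have e : Bᵀ * (R⁻¹ - (B * P⁻¹ * Bᵀ)⁻¹) * B = Bᵀ * R⁻¹ * B - P := by
    rw [Matrix.mul_sub, Matrix.sub_mul, hPW]
  have hBid : IsUnit (B⁻¹).det := by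
    rw [Matrix.det_nonsing_inv]
    exact hBd.ringInverse
  have hcongr := posDef_conj hBRB hBid
  have e2 : B⁻¹ᵀ * (Bᵀ * R⁻¹ * B - P) * B⁻¹ = R⁻¹ - (B * P⁻¹ * Bᵀ)⁻¹ := by
    rw [← e, Matrix.transpose_nonsing_inv, ← Matrix.mul_assoc, ← Matrix.mul_assoc,
      Matrix.nonsing_inv_mul _ hBtd, Matrix.one_mul, Matrix.mul_assoc,
      Matrix.mul_nonsing_inv _ hBd, Matrix.mul_one]
  rw [e2] at hcongr
  -- invert back: W - R ≻ 0
  have hWR : ((B * P⁻¹ * Bᵀ) - R).PosDef := by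
    have h3 := inv_sub_inv_posDef hWpd.inv hRpd.inv hcongr
    rwa [Matrix.nonsing_inv_nonsing_inv _ hWd, Matrix.nonsing_inv_nonsing_inv _ hRd] at h3
  have hCC : (-(A * P⁻¹ + P⁻¹ * Aᵀ)).PosDef := by
    rw [hW, add_sub_cancel_left] at hWR
    exact hWR
  have idPC : Pᵀ * (-(A * P⁻¹ + P⁻¹ * Aᵀ)) * P = -(P * A + Aᵀ * P) := by
    rw [hPt]
    simp only [Matrix.mul_neg, Matrix.neg_mul, Matrix.mul_add, Matrix.add_mul,
      Matrix.mul_assoc, cp1', cp2', cp1, cp2, Matrix.mul_one, Matrix.one_mul]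
  rw [← idPC]
  exact posDef_conj hCC hPd

/-- Dilation via the projection lemma: for `P > 0`,
`[[PA + AᵀP − P, P], [P, −P]] < 0` iff there exists `V` such that
`[[−(V + Vᵀ), VᵀA + P, Vᵀ], [(VᵀA + P)ᵀ, −P, 0], [V, 0, −P]] < 0`. -/
theorem dilation_via_projection (n : ℕ)
    (A P : Matrix (Fin n) (Fin n) ℝ) (hP : P.PosDef) :
    (-(Matrix.fromBlocks (P * A + Aᵀ * P - P) P P (-P))).PosDef ↔
      (∃ V : Matrix (Fin n) (Fin n) ℝ,
        (-(Matrix.block3 (-(V + Vᵀ)) (Vᵀ * A + P) Vᵀ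
            (Vᵀ * A + P)ᵀ (-P) 0
            V 0 (-P))).PosDef) := by
  have hPd : IsUnit P.det := isUnit_iff_ne_zero.2 hP.det_pos.ne'
  have hPt : Pᵀ = P := by rw [← rct]; exact hP.1
  have cp1 : P * P⁻¹ = 1 := Matrix.mul_nonsing_inv _ hPd
  -- reduce the left-hand side via Schur complement
  have lhs_iff : (-(Matrix.fromBlocks (P * A + Aᵀ * P - P) P P (-P))).PosDef ↔
      (-(P * A + Aᵀ * P)).PosDef := by
    have e : -(Matrix.fromBlocks (P * A + Aᵀ * P - P) P P (-P))
        = Matrix.fromBlocks (-(P * A + Aᵀ * P - P)) (-P) (-P)ᴴ P := by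
      rw [Matrix.fromBlocks_neg, rct, Matrix.transpose_neg, hPt, neg_neg]
    rw [e, posDef_fromBlocks₂₂ _ _ hP]
    have e2 : -(P * A + Aᵀ * P - P) - (-P) * P⁻¹ * (-P)ᴴ = -(P * A + Aᵀ * P) := by
      rw [rct, Matrix.transpose_neg, hPt]
      have h3 : (-P) * P⁻¹ * (-P) = P := by
        rw [Matrix.neg_mul, cp1, Matrix.neg_mul, Matrix.one_mul, neg_neg]
      rw [h3]
      abel
    rw [e2]
  -- reduce the right-hand side via Schur complement, for each V
  have rhs_iff : ∀ V : Matrix (Fin n) (Fin n) ℝ,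
      (-(Matrix.block3 (-(V + Vᵀ)) (Vᵀ * A + P) Vᵀ
          (Vᵀ * A + P)ᵀ (-P) 0
          V 0 (-P))).PosDef ↔
      (V + Vᵀ - (Vᵀ * A + P) * P⁻¹ * (Vᵀ * A + P)ᵀ - Vᵀ * P⁻¹ * V).PosDef := by
    intro V
    have hD : (Matrix.fromBlocks P 0 0 P).PosDef := posDef_diagBlocks hP hP
    have e : -(Matrix.block3 (-(V + Vᵀ)) (Vᵀ * A + P) Vᵀ
          (Vᵀ * A + P)ᵀ (-P) 0
          V 0 (-P))
        = Matrix.fromBlocks (V + Vᵀ)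
            (Matrix.fromCols (-(Vᵀ * A + P)) (-Vᵀ))
            (Matrix.fromCols (-(Vᵀ * A + P)) (-Vᵀ))ᴴ
            (Matrix.fromBlocks P 0 0 P) := by
      rw [Matrix.block3, Matrix.fromBlocks_neg, Matrix.fromBlocks_neg, neg_neg,
        Matrix.fromCols_neg, Matrix.conjTranspose_fromCols_eq_fromRows_conjTranspose,
        Matrix.fromRows_neg, rct, rct]
      simp [Matrix.transpose_neg]
    rw [e, posDef_fromBlocks₂₂ _ _ hD]
    have hinv : (Matrix.fromBlocks P 0 0 P)⁻¹ = Matrix.fromBlocks P⁻¹ 0 0 P⁻¹ :=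
      inv_diagBlocks hPd hPd
    have e2 : V + Vᵀ - (Matrix.fromCols (-(Vᵀ * A + P)) (-Vᵀ))
          * (Matrix.fromBlocks P 0 0 P)⁻¹
          * (Matrix.fromCols (-(Vᵀ * A + P)) (-Vᵀ))ᴴ
        = V + Vᵀ - (Vᵀ * A + P) * P⁻¹ * (Vᵀ * A + P)ᵀ - Vᵀ * P⁻¹ * V := by
      rw [hinv, Matrix.conjTranspose_fromCols_eq_fromRows_conjTranspose, rct, rct,
        Matrix.fromCols_mul_fromBlocks, Matrix.fromCols_mul_fromRows]
      simp only [Matrix.mul_zero, Matrix.zero_mul, add_zero, zero_add,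
        Matrix.neg_mul, Matrix.mul_neg, neg_neg, Matrix.transpose_neg]
      abel
    rw [e2]
  rw [lhs_iff]
  constructor
  · intro h
    obtain ⟨V, hV⟩ := core A P hP h
    exact ⟨V, (rhs_iff V).2 hV⟩
  · rintro ⟨V, hV⟩
    exact core_rev A P hP V ((rhs_iff V).1 hV)
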